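/- Let q be a prime power and n > 1 a positive integer coprime to q, with prime factorization n = p₁^{e₁}···p_s^{e_s}. Define ω = 2·ord_{rad(n)}(q) if q^{ord_{rad(n)}(q)} ≡ 3 (mod 4) and 8 ∣ n, and ω = ord_{rad(n)}(q) otherwise. Then the multiplicative order of q modulo n satisfies ord_n(q) = ω · p₁^{m₁}···p_s^{m_s}, where m_i = max(e_i − v_{p_i}(q^{ω} − 1), 0) for each i. (In particular, the degree of any irreducible polynomial over the field with q elements of order n equals this quantity, so the Singleton bound of the irreducible constacyclic code it generates is ω·p₁^{m₁}···p_s^{m_s} + 1.) -/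
import Mathlib



lemma aux_order_dvd_iff (q m k : ℕ) (hq : 1 ≤ q) :
    orderOf (q : ZMod m) ∣ k ↔ m ∣ q ^ k - 1 := by
  rw [orderOf_dvd_iff_pow_eq_one, ← ZMod.natCast_eq_zero_iff,
    Nat.cast_sub (Nat.one_le_pow _ _ hq), Nat.cast_pow, Nat.cast_one, sub_eq_zero]

lemma aux_not_dvd (p a : ℕ) (hp : 2 ≤ p) (ha : 2 ≤ a) (hpa : p ∣ a - 1) : ¬ p ∣ a := by
  intro h
  have h1 : p ∣ a - (a - 1) := Nat.dvd_sub h hpa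
  have h2 : a - (a - 1) = 1 := by omega
  rw [h2] at h1
  exact absurd (Nat.le_of_dvd one_pos h1) (by omega)

lemma aux_lte_odd (p a u : ℕ) (hp : p.Prime) (hodd : Odd p) (ha : 2 ≤ a)
    (hpa : p ∣ a - 1) (hu : u ≠ 0) :
    (a ^ u - 1).factorization p = (a - 1).factorization p + u.factorization p := by
  haveI : Fact p.Prime := ⟨hp⟩
  have hx : ¬ p ∣ a := aux_not_dvd p a hp.two_le ha hpa
  have := padicValNat.pow_sub_pow (p := p) hodd (x := a) (y := 1) (by omega) (by simpa) hx hu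
  rw [one_pow] at this
  rw [Nat.factorization_def _ hp, Nat.factorization_def _ hp, Nat.factorization_def _ hp, this]

lemma aux_v2_mod4 (x : ℕ) (hx : x % 4 = 2) : x.factorization 2 = 1 := by
  have hx0 : x ≠ 0 := by omega
  have h1 : (2:ℕ)^1 ∣ x := by norm_num; omega
  have h2 : ¬ (2:ℕ)^2 ∣ x := by norm_num; omega
  rw [Nat.Prime.pow_dvd_iff_le_factorization Nat.prime_two hx0] at h1 h2
  omega

lemma aux_pow_mod4_one (a u : ℕ) (ha : a % 4 = 1) : a ^ u % 4 = 1 := by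
  rw [Nat.pow_mod, ha, one_pow]; rfl

lemma aux_pow_mod4_three_odd (a u : ℕ) (ha : a % 4 = 3) (hu : u % 2 = 1) : a ^ u % 4 = 3 := by
  obtain ⟨k, rfl⟩ : ∃ k, u = 2*k+1 := ⟨u/2, by omega⟩
  rw [Nat.pow_mod, ha, pow_succ, pow_mul, Nat.mul_mod, Nat.pow_mod]
  norm_num

lemma aux_pow_mod4_three_even (a u : ℕ) (ha : a % 4 = 3) (hu : u % 2 = 0) : a ^ u % 4 = 1 := by
  obtain ⟨k, rfl⟩ : ∃ k, u = 2*k := ⟨u/2, by omega⟩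
  rw [Nat.pow_mod, ha, pow_mul, Nat.pow_mod]
  norm_num

lemma aux_odd_geom (a u : ℕ) (ha2 : 2 ≤ a) (ha : a % 2 = 1) (hu : u % 2 = 1) :
    (a ^ u - 1).factorization 2 = (a - 1).factorization 2 := by
  have hid : a ^ u - 1 = (a - 1) * ∑ i ∈ Finset.range u, a ^ i := by
    have h := geom_sum_mul (a : ℤ) u
    have h1 : (1:ℤ) ≤ (a:ℤ) ^ u := one_le_pow₀ (by exact_mod_cast by omega)
    zify [Nat.one_le_pow u a (by omega), (by omega : 1 ≤ a)]
    rw [← h]; ring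
  have hS : (∑ i ∈ Finset.range u, a ^ i) % 2 = 1 := by
    rw [Finset.sum_nat_mod]
    have : ∀ i ∈ Finset.range u, a ^ i % 2 = 1 := fun i _ => by
      rw [Nat.pow_mod, ha, one_pow]; rfl
    rw [Finset.sum_congr rfl this]
    simpa using hu
  rw [hid, Nat.factorization_mul (by omega) (by omega)]
  have : (∑ i ∈ Finset.range u, a ^ i).factorization 2 = 0 :=
    Nat.factorization_eq_zero_of_not_dvd (by omega)
  simp [this]

lemma aux_lte_two (a u : ℕ) (ha : a % 4 = 1) (ha2 : 2 ≤ a) (hu : u ≠ 0) :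
    (a ^ u - 1).factorization 2 = (a - 1).factorization 2 + u.factorization 2 := by
  rcases Nat.even_or_odd u with he | ho
  · have h := padicValNat.pow_two_sub_pow (x := a) (y := 1) (by omega) (by simpa using (by omega : 2 ∣ a - 1)) (by omega) hu (by simpa using he)
    rw [one_pow] at h
    have hv : (a + 1).factorization 2 = 1 := aux_v2_mod4 _ (by omega)
    rw [Nat.factorization_def _ Nat.prime_two, Nat.factorization_def _ Nat.prime_two,
      Nat.factorization_def _ Nat.prime_two]
    rw [Nat.factorization_def _ Nat.prime_two] at hv
    omega
  · have ho2 := Nat.odd_iff.mp ho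
    rw [aux_odd_geom a u ha2 (by omega) ho2,
      Nat.factorization_eq_zero_of_not_dvd (by omega : ¬ 2 ∣ u)]
    simp

lemma aux_odd_sq (x : ℕ) (hx : x % 2 = 1) : x ^ 2 % 4 = 1 := by
  obtain ⟨k, rfl⟩ : ∃ k, x = 2*k+1 := ⟨x/2, by omega⟩
  have h : (2*k+1)^2 = 4*(k*k+k)+1 := by ring
  omega

lemma aux_key_two3 (a u e : ℕ) (ha : a % 4 = 3) (hu : u ≠ 0) (he1 : 1 ≤ e) (he2 : e ≤ 2) :
    e ≤ (a ^ u - 1).factorization 2 ↔ e - (a - 1).factorization 2 ≤ u.factorization 2 := by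
  have ha2 : 2 ≤ a := by omega
  have hau : 2 ≤ a ^ u := by
    calc 2 ≤ a := ha2
    _ = a ^ 1 := (pow_one a).symm
    _ ≤ a ^ u := Nat.pow_le_pow_right (by omega) (by omega)
  have hane : a ^ u - 1 ≠ 0 := by omega
  have hao : a % 2 = 1 := by omega
  have hauo : a ^ u % 2 = 1 := by rw [Nat.pow_mod, hao, one_pow]; rfl
  have hv : (a - 1).factorization 2 = 1 := aux_v2_mod4 _ (by omega)
  rw [hv]
  interval_cases e
  · have h1 : (2:ℕ)^1 ∣ a ^ u - 1 := by norm_num; omega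
    rw [Nat.Prime.pow_dvd_iff_le_factorization Nat.prime_two hane] at h1
    simp [h1]
  · rcases Nat.even_or_odd u with he | ho
    · have hmod : a ^ u % 4 = 1 := aux_pow_mod4_three_even a u ha (Nat.even_iff.mp he)
      have h1 : (2:ℕ)^2 ∣ a ^ u - 1 := by norm_num; omega
      rw [Nat.Prime.pow_dvd_iff_le_factorization Nat.prime_two hane] at h1
      have h2 : (2:ℕ)^1 ∣ u := by have := Nat.even_iff.mp he; norm_num; omega
      rw [Nat.Prime.pow_dvd_iff_le_factorization Nat.prime_two hu] at h2
      constructor <;> intro <;> omega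
    · have hmod : a ^ u % 4 = 3 := aux_pow_mod4_three_odd a u ha (Nat.odd_iff.mp ho)
      have h1 : (a ^ u - 1).factorization 2 = 1 := aux_v2_mod4 _ (by omega)
      have h2 : u.factorization 2 = 0 :=
        Nat.factorization_eq_zero_of_not_dvd (by have := Nat.odd_iff.mp ho; omega)
      rw [h1, h2]
      omega

/-- For a prime power `q` and `n > 1` coprime to `q`, with
`ω = 2·ord_{rad n}(q)` if `q^{ord_{rad n}(q)} ≡ 3 (mod 4)` and `8 ∣ n`, and
`ω = ord_{rad n}(q)` otherwise, the multiplicative order of `q` modulo `n` is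
`ord_n(q) = ω · ∏_p p^{max(v_p(n) - v_p(q^ω - 1), 0)}`, the product running over the prime
divisors of `n`. -/
theorem order_mod_n_formula (q n : ℕ) (hq : IsPrimePow q) (hn : 1 < n)
    (hco : Nat.Coprime n q)
    (r : ℕ) (hr : r = ∏ p ∈ n.primeFactors, p)
    (ω : ℕ) (hω : ω = if q ^ orderOf (q : ZMod r) % 4 = 3 ∧ 8 ∣ n
      then 2 * orderOf (q : ZMod r) else orderOf (q : ZMod r)) :
    orderOf (q : ZMod n) =
      ω * ∏ p ∈ n.primeFactors, p ^ (n.factorization p - (q ^ ω - 1).factorization p) := by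
  have hq2 : 2 ≤ q := hq.two_le
  have hn0 : n ≠ 0 := by omega
  have hrdvd : r ∣ n := hr ▸ Nat.prod_primeFactors_dvd n
  have hr0 : r ≠ 0 := fun h => hn0 (Nat.eq_zero_of_zero_dvd (h ▸ hrdvd))
  have hr1 : 1 < r := by
    rcases Nat.nonempty_primeFactors.mpr hn with ⟨p, hp⟩
    have hpp := Nat.prime_of_mem_primeFactors hp
    have hdr : p ∣ r := hr ▸ Finset.dvd_prod_of_mem _ hp
    have := Nat.le_of_dvd (by omega) hdr
    have := hpp.two_le
    omega
  haveI : NeZero n := ⟨hn0⟩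
  haveI : NeZero r := ⟨hr0⟩
  set O := orderOf (q : ZMod r) with hOdef
  set t := orderOf (q : ZMod n) with htdef
  have htpos : 0 < t := by
    have hu : IsUnit (q : ZMod n) := (ZMod.isUnit_iff_coprime q n).mpr hco.symm
    rw [htdef, ← hu.unit_spec, orderOf_units]
    exact orderOf_pos _
  have hOpos : 0 < O := by
    have hu : IsUnit (q : ZMod r) := (ZMod.isUnit_iff_coprime q r).mpr
      ((Nat.Coprime.coprime_dvd_left hrdvd hco).symm)
    rw [hOdef, ← hu.unit_spec, orderOf_units]
    exact orderOf_pos _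
  have hωpos : 0 < ω := by rw [hω]; split <;> omega
  have hOω : O ∣ ω := by
    rw [hω]; split
    · exact dvd_mul_left O 2
    · exact dvd_rfl
  have hbridge_r : ∀ k, (O ∣ k ↔ r ∣ q ^ k - 1) := fun k => aux_order_dvd_iff q r k (by omega)
  have hbridge_n : ∀ k, (t ∣ k ↔ n ∣ q ^ k - 1) := fun k => aux_order_dvd_iff q n k (by omega)
  have hra : r ∣ q ^ ω - 1 := (hbridge_r ω).mp hOω
  have ha2 : 2 ≤ q ^ ω := by
    calc 2 = 2 ^ 1 := rfl
    _ ≤ q ^ ω := Nat.pow_le_pow_left hq2 1 |>.trans (Nat.pow_le_pow_right (by omega) (by omega))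
  have hq_odd : 2 ∣ n → q % 2 = 1 := by
    intro h2n
    by_contra h
    have h2q : 2 ∣ q := by omega
    have : (2:ℕ) ∣ 1 := hco ▸ Nat.dvd_gcd h2n h2q
    omega
  have h83 : q ^ ω % 4 = 3 → ¬ (8:ℕ) ∣ n := by
    intro h3
    by_cases hsp : q ^ O % 4 = 3 ∧ 8 ∣ n
    · exfalso
      rw [hω, if_pos hsp] at h3
      have hqo : q % 2 = 1 := hq_odd (dvd_trans (by norm_num) hsp.2)
      have hqOo : q ^ O % 2 = 1 := by rw [Nat.pow_mod, hqo, one_pow]; rfl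
      have : q ^ (2 * O) % 4 = 1 := by
        rw [mul_comm, pow_mul]
        exact aux_odd_sq _ hqOo
      omega
    · rw [hω, if_neg hsp] at h3
      intro h8
      exact hsp ⟨h3, h8⟩
  have hOt : O ∣ t := (hbridge_r t).mpr (dvd_trans hrdvd ((hbridge_n t).mp dvd_rfl))
  have hωt : ω ∣ t := by
    rw [hω]; split
    case isTrue hsp =>
      obtain ⟨h3, h8⟩ := hsp
      obtain ⟨s, hs⟩ := hOt
      have h4 : 4 ∣ q ^ t - 1 := dvd_trans (by norm_num) (dvd_trans h8 ((hbridge_n t).mp dvd_rfl))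
      have hqt1 : 1 ≤ q ^ t := Nat.one_le_pow _ _ (by omega)
      have hmod : q ^ t % 4 = 1 := by omega
      have hseven : s % 2 = 0 := by
        by_contra hodd
        have : q ^ t % 4 = 3 := by
          rw [hs, pow_mul]
          exact aux_pow_mod4_three_odd _ s h3 (by omega)
        omega
      obtain ⟨s', rfl⟩ : ∃ s', s = 2 * s' := ⟨s/2, by omega⟩
      exact ⟨s', by rw [hs]; ring⟩
    case isFalse => exact hOt
  -- key per-prime equivalence
  have key : ∀ u : ℕ, u ≠ 0 → ∀ p ∈ n.primeFactors,
      (n.factorization p ≤ ((q ^ ω) ^ u - 1).factorization p ↔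
        n.factorization p - (q ^ ω - 1).factorization p ≤ u.factorization p) := by
    intro u hu p hp
    have hpp := Nat.prime_of_mem_primeFactors hp
    have hpn := Nat.dvd_of_mem_primeFactors hp
    have hpa : p ∣ q ^ ω - 1 := dvd_trans (hr ▸ Finset.dvd_prod_of_mem _ hp) hra
    rcases hpp.eq_two_or_odd' with rfl | hodd
    · have hqo : q % 2 = 1 := hq_odd hpn
      have hao : q ^ ω % 2 = 1 := by rw [Nat.pow_mod, hqo, one_pow]; rfl
      have hcase : q ^ ω % 4 = 1 ∨ q ^ ω % 4 = 3 := by omega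
      rcases hcase with h1 | h3
      · rw [aux_lte_two _ u h1 ha2 hu]; omega
      · have h8 := h83 h3
        have he2 : n.factorization 2 ≤ 2 := by
          by_contra hc
          apply h8
          have : (2:ℕ) ^ 3 ∣ n :=
            (Nat.Prime.pow_dvd_iff_le_factorization Nat.prime_two hn0).mpr (by omega)
          simpa using this
        have he1 : 1 ≤ n.factorization 2 :=
          Nat.Prime.factorization_pos_of_dvd Nat.prime_two hn0 hpn
        exact aux_key_two3 (q ^ ω) u _ h3 hu he1 he2
    · rw [aux_lte_odd p (q ^ ω) u hpp hodd ha2 hpa hu]; omega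
  set P := ∏ p ∈ n.primeFactors, p ^ (n.factorization p - (q ^ ω - 1).factorization p) with hP
  have hP0 : P ≠ 0 :=
    Finset.prod_ne_zero_iff.mpr fun p hp =>
      pow_ne_zero _ (Nat.prime_of_mem_primeFactors hp).pos.ne'
  have hPfact : ∀ ℓ, P.factorization ℓ =
      if ℓ ∈ n.primeFactors then n.factorization ℓ - (q ^ ω - 1).factorization ℓ else 0 := by
    intro ℓ
    rw [hP, Nat.factorization_prod
      (fun p hp => pow_ne_zero _ (Nat.prime_of_mem_primeFactors hp).pos.ne')]
    rw [Finset.sum_apply']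
    rw [Finset.sum_congr rfl (fun p hp => by
      rw [(Nat.prime_of_mem_primeFactors hp).factorization_pow, Finsupp.single_apply])]
    rw [Finset.sum_ite_eq' n.primeFactors ℓ
      (fun p => n.factorization p - (q ^ ω - 1).factorization p)]
  have h1 : t ∣ ω * P := by
    rw [hbridge_n, pow_mul]
    have hgt : 1 < (q ^ ω) ^ P := Nat.one_lt_pow hP0 (by omega)
    have hne : (q ^ ω) ^ P - 1 ≠ 0 := by omega
    rw [← Nat.factorization_le_iff_dvd hn0 hne]
    intro ℓ
    by_cases hl : ℓ ∈ n.primeFactors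
    · apply (key P hP0 ℓ hl).mpr
      rw [hPfact ℓ, if_pos hl]
    · have : n.factorization ℓ = 0 := by
        rw [← Finsupp.notMem_support_iff, Nat.support_factorization]
        exact hl
      simp [this]
  have h2 : ω * P ∣ t := by
    obtain ⟨u, hu⟩ := hωt
    have hu0 : u ≠ 0 := by
      rintro rfl
      rw [mul_zero] at hu
      omega
    have hnd : n ∣ q ^ t - 1 := (hbridge_n t).mp dvd_rfl
    rw [hu]
    apply mul_dvd_mul_left
    rw [← Nat.factorization_le_iff_dvd hP0 hu0]
    intro ℓ
    rw [hPfact ℓ]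
    by_cases hl : ℓ ∈ n.primeFactors
    · rw [if_pos hl]
      apply (key u hu0 ℓ hl).mp
      have hdd : n ∣ (q ^ ω) ^ u - 1 := by rw [← pow_mul, ← hu]; exact hnd
      have hgt : 1 < (q ^ ω) ^ u := Nat.one_lt_pow hu0 (by omega)
      have hne : (q ^ ω) ^ u - 1 ≠ 0 := by omega
      exact (Nat.factorization_le_iff_dvd hn0 hne).mpr hdd ℓ
    · rw [if_neg hl]
      exact Nat.zero_le _
  exact Nat.dvd_antisymm h1 h2
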